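/- For every m ∈ ℕ there exists a positive constant C (depending only on m) such that for every real Hilbert space H, every bounded nonnegative selfadjoint operator A : H →L[ℝ] H, and every f ∈ H, ∫₀^∞ (1+t)^m ⟨A^{m+1} exp(−2t • A) f, f⟩ dt ≤ C (‖f‖² + ⟨A^m f, f⟩). (This is the smoothing estimate ∫₀^∞ (1+t)^m ‖A^{(m+1)/2} e^{−tA} f‖² dt ≤ C ‖f‖_{D(A^{m/2})}² used in the proof of the asymptotic expansion.) -/

import Mathlib

open scoped RealInnerProductSpace

universe u

set_option synthInstance.maxHeartbeats 1000000
set_option maxHeartbeats 1000000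

section aux
variable {H : Type u} [NormedAddCommGroup H] [InnerProductSpace ℝ H] [CompleteSpace H]

lemma sa_inner_move {B : H →L[ℝ] H} (hB : IsSelfAdjoint B) (x y : H) :
    ⟪B x, y⟫ = ⟪x, B y⟫ := by
  conv_lhs => rw [← hB.adjoint_eq]
  exact ContinuousLinearMap.adjoint_inner_left B y x

lemma pow_move (A : H →L[ℝ] H) (hA : IsSelfAdjoint A) (a b : ℕ) (x y : H) :
    ⟪(A ^ (a + b)) x, y⟫ = ⟪(A ^ b) x, (A ^ a) y⟫ := by
  rw [pow_add, ContinuousLinearMap.mul_apply, sa_inner_move (hA.pow a)]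

lemma pow_inner_nonneg (A : H →L[ℝ] H) (hA : IsSelfAdjoint A)
    (hpos : ∀ z : H, 0 ≤ ⟪A z, z⟫) (k : ℕ) (x : H) : 0 ≤ ⟪(A ^ k) x, x⟫ := by
  rcases Nat.even_or_odd k with ⟨i, hi⟩ | ⟨i, hi⟩
  · rw [hi, pow_move A hA i i]
    exact real_inner_self_nonneg
  · rw [show k = i + (i + 1) by omega, pow_move A hA, pow_succ' A i,
      ContinuousLinearMap.mul_apply]
    exact hpos _

lemma aCS (A : H →L[ℝ] H) (hA : IsSelfAdjoint A) (hpos : ∀ z : H, 0 ≤ ⟪A z, z⟫) (x y : H) :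
    ⟪A x, y⟫ ^ 2 ≤ ⟪A x, x⟫ * ⟪A y, y⟫ := by
  have hsym : ⟪A y, x⟫ = ⟪A x, y⟫ := by rw [sa_inner_move hA, real_inner_comm]
  have key : ∀ s : ℝ, 0 ≤ ⟪A y, y⟫ * (s * s) + (2 * ⟪A x, y⟫) * s + ⟪A x, x⟫ := by
    intro s
    have h := hpos (x + s • y)
    have hexp : ⟪A (x + s • y), x + s • y⟫
        = ⟪A x, x⟫ + s * ⟪A x, y⟫ + s * ⟪A y, x⟫ + s * (s * ⟪A y, y⟫) := by
      simp only [map_add, map_smul, inner_add_left, inner_add_right,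
        real_inner_smul_left, real_inner_smul_right]
      ring
    rw [hexp, hsym] at h
    nlinarith [h]
  have hd := discrim_le_zero key
  rw [discrim] at hd
  nlinarith [hd]

lemma logconvex_le_max (c : ℕ → ℝ) (h0 : ∀ j, 0 ≤ c j)
    (hlc : ∀ j, c (j + 1) ^ 2 ≤ c j * c (j + 2)) (m k : ℕ) (hk : k ≤ m) :
    c k ≤ max (c 0) (c m) := by
  have step : ∀ j, c j ≤ c (j + 1) → c (j + 1) ≤ c (j + 2) := by
    intro j hj
    rcases eq_or_lt_of_le (h0 (j + 1)) with h | h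
    · rw [← h]; exact h0 (j + 2)
    · nlinarith [hlc j, h0 (j + 2)]
  have mono : ∀ j, c j ≤ c (j + 1) → ∀ i, j ≤ i → c i ≤ c (i + 1) := by
    intro j hj i hi
    induction i, hi using Nat.le_induction with
    | base => exact hj
    | succ n hn ih => exact step n ih
  by_cases hdec : ∀ j, j < k → c (j + 1) < c j
  · have hup : ∀ n, n ≤ k → c n ≤ c 0 := by
      intro n
      induction n with
      | zero => intro _; exact le_rfl
      | succ p ih =>
        intro hp
        have hpk : p < k := lt_of_lt_of_le (Nat.lt_succ_self p) hp
        exact le_trans (le_of_lt (hdec p hpk)) (ih (le_of_lt hpk))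
    exact le_max_of_le_left (hup k le_rfl)
  · push_neg at hdec
    obtain ⟨j, hjk, hj⟩ := hdec
    have hmono := mono j hj
    have hchain : ∀ i, k ≤ i → c k ≤ c i := by
      intro i hi
      induction i, hi using Nat.le_induction with
      | base => exact le_rfl
      | succ n hn ih => exact ih.trans (hmono n (le_trans hjk.le hn))
    exact le_max_of_le_right (hchain m hk)

lemma logconv (A : H →L[ℝ] H) (hA : IsSelfAdjoint A) (hpos : ∀ z : H, 0 ≤ ⟪A z, z⟫)
    (f : H) (j : ℕ) :
    ⟪(A ^ (j + 1)) f, f⟫ ^ 2 ≤ ⟪(A ^ j) f, f⟫ * ⟪(A ^ (j + 2)) f, f⟫ := by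
  rcases Nat.even_or_odd j with ⟨i, hi⟩ | ⟨i, hi⟩
  · have e1 : ⟪(A ^ (j + 1)) f, f⟫ = ⟪(A ^ (i + 1)) f, (A ^ i) f⟫ := by
      rw [show j + 1 = i + (i + 1) by omega, pow_move A hA]
    have e2 : ⟪(A ^ j) f, f⟫ = ⟪(A ^ i) f, (A ^ i) f⟫ := by
      rw [show j = i + i by omega, pow_move A hA]
    have e3 : ⟪(A ^ (j + 2)) f, f⟫ = ⟪(A ^ (i + 1)) f, (A ^ (i + 1)) f⟫ := by
      rw [show j + 2 = (i + 1) + (i + 1) by omega, pow_move A hA]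
    rw [e1, e2, e3, pow_two]
    calc ⟪(A ^ (i+1)) f, (A ^ i) f⟫ * ⟪(A ^ (i+1)) f, (A ^ i) f⟫
        ≤ ⟪(A ^ (i+1)) f, (A ^ (i+1)) f⟫ * ⟪(A ^ i) f, (A ^ i) f⟫ :=
          real_inner_mul_inner_self_le _ _
      _ = ⟪(A ^ i) f, (A ^ i) f⟫ * ⟪(A ^ (i+1)) f, (A ^ (i+1)) f⟫ := mul_comm _ _
  · have hx : (A ^ (i + 1)) f = A ((A ^ i) f) := by
      rw [pow_succ' A i, ContinuousLinearMap.mul_apply]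
    have hx2 : (A ^ (i + 2)) f = A ((A ^ (i + 1)) f) := by
      rw [show i + 2 = (i+1) + 1 by omega, pow_succ' A (i+1), ContinuousLinearMap.mul_apply]
    have e1 : ⟪(A ^ (j + 1)) f, f⟫ = ⟪A ((A ^ i) f), (A ^ (i + 1)) f⟫ := by
      rw [show j + 1 = (i + 1) + (i + 1) by omega, pow_move A hA, ← hx]
    have e2 : ⟪(A ^ j) f, f⟫ = ⟪A ((A ^ i) f), (A ^ i) f⟫ := by
      rw [show j = i + (i + 1) by omega, pow_move A hA, ← hx]
    have e3 : ⟪(A ^ (j + 2)) f, f⟫ = ⟪A ((A ^ (i + 1)) f), (A ^ (i + 1)) f⟫ := by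
      rw [show j + 2 = (i + 1) + (i + 2) by omega, pow_move A hA, ← hx2]
    rw [e1, e2, e3]
    exact aCS A hA hpos _ _

lemma exp_sa (A : H →L[ℝ] H) (hA : IsSelfAdjoint A) (s : ℝ) :
    IsSelfAdjoint (NormedSpace.exp (s • A)) := by
  rw [IsSelfAdjoint, NormedSpace.star_exp, star_smul, star_trivial, hA.star_eq]

lemma phi_nonneg (A : H →L[ℝ] H) (hA : IsSelfAdjoint A) (hpos : ∀ z : H, 0 ≤ ⟪A z, z⟫)
    (f : H) (k : ℕ) (t : ℝ) :
    0 ≤ ⟪(A ^ k) (NormedSpace.exp ((-(2 * t)) • A) f), f⟫ := by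
  set B := NormedSpace.exp ((-t) • A) with hB
  have h2t : (-(2 * t)) • A = (-t) • A + (-t) • A := by module
  have hsplit : NormedSpace.exp ((-(2 * t)) • A) = B * B := by
    rw [h2t, NormedSpace.exp_add_of_commute_of_mem_ball (𝕂 := ℝ) (Commute.refl ((-t) • A))
      (by simp [NormedSpace.expSeries_radius_eq_top]) (by simp [NormedSpace.expSeries_radius_eq_top])]
  have hBsa : IsSelfAdjoint B := exp_sa A hA (-t)
  have hcomm : Commute (A ^ k) B :=
    (((Commute.refl A).smul_right (-t)).exp_right).pow_left k
  have happ : (A ^ k) (B (B f)) = B ((A ^ k) (B f)) := by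
    have := DFunLike.congr_fun hcomm.eq (B f)
    simpa [ContinuousLinearMap.mul_apply] using this
  rw [hsplit, ContinuousLinearMap.mul_apply, happ, sa_inner_move hBsa]
  exact pow_inner_nonneg A hA hpos k (B f)

lemma phi_deriv (A : H →L[ℝ] H) (f : H) (k : ℕ) (t : ℝ) :
    HasDerivAt (fun s => ⟪(A ^ k) (NormedSpace.exp ((-(2 * s)) • A) f), f⟫)
      (-2 * ⟪(A ^ (k + 1)) (NormedSpace.exp ((-(2 * t)) • A) f), f⟫) t := by
  set x : H →L[ℝ] H := (-2 : ℝ) • A with hx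
  have hxs : ∀ s : ℝ, (-(2 * s)) • A = s • x := by
    intro s; rw [hx, smul_smul]; congr 1; ring
  set L : (H →L[ℝ] H) →L[ℝ] ℝ :=
    ((innerSL ℝ f).comp (A ^ k)).comp (ContinuousLinearMap.apply ℝ H f) with hL
  have hLapp : ∀ B : H →L[ℝ] H, L B = ⟪(A ^ k) (B f), f⟫ := by
    intro B
    simp [hL, ContinuousLinearMap.comp_apply, ContinuousLinearMap.apply_apply,
      innerSL_apply_apply, real_inner_comm]
  have base : HasDerivAt (fun s : ℝ => NormedSpace.exp (s • x))
      (x * NormedSpace.exp (t • x)) t := hasDerivAt_exp_smul_const' x t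
  have comp : HasDerivAt (fun s : ℝ => L (NormedSpace.exp (s • x)))
      (L (x * NormedSpace.exp (t • x))) t :=
    L.hasFDerivAt.comp_hasDerivAt t base
  have hfun : (fun s : ℝ => L (NormedSpace.exp (s • x)))
      = fun s => ⟪(A ^ k) (NormedSpace.exp ((-(2 * s)) • A) f), f⟫ := by
    funext s; rw [hLapp, hxs]
  have hval : L (x * NormedSpace.exp (t • x))
      = -2 * ⟪(A ^ (k + 1)) (NormedSpace.exp ((-(2 * t)) • A) f), f⟫ := by
    rw [hLapp, hxs t]
    set E := NormedSpace.exp (t • x) with hE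
    have h1 : (x * E) f = (-2 : ℝ) • (A (E f)) := by
      rw [ContinuousLinearMap.mul_apply, hx]
      simp
    have h2 : (A ^ (k + 1)) (E f) = (A ^ k) (A (E f)) := by
      rw [pow_succ A k, ContinuousLinearMap.mul_apply]
    rw [h1, map_smul, real_inner_smul_left, h2]
  rw [hfun, hval] at comp
  exact comp

lemma phi_cont (A : H →L[ℝ] H) (f : H) (k : ℕ) :
    Continuous (fun t : ℝ => ⟪(A ^ k) (NormedSpace.exp ((-(2 * t)) • A) f), f⟫) :=
  continuous_iff_continuousAt.2 fun t => (phi_deriv A f k t).continuousAt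

lemma phi_zero (A : H →L[ℝ] H) (f : H) (k : ℕ) :
    ⟪(A ^ k) (NormedSpace.exp ((-(2 * (0:ℝ))) • A) f), f⟫ = ⟪(A ^ k) f, f⟫ := by
  norm_num [NormedSpace.exp_zero]

end aux

/-- smoothing estimate, Lemma 2.1 of [Sobajima, Math. Ann.]:
`∫₀^∞ (1+t)^m ‖A^{(m+1)/2} e^{-tA} f‖² dt ≤ C ‖f‖_{D(A^{m/2})}²`, written as
`∫₀^∞ (1+t)^m ⟨A^{m+1} e^{-2tA} f, f⟩ dt ≤ C (‖f‖² + ⟨A^m f, f⟩)`. -/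
theorem stmt_15 :
    ∀ m : ℕ, ∃ C : ℝ, 0 < C ∧
      ∀ (H : Type u) [NormedAddCommGroup H] [InnerProductSpace ℝ H] [CompleteSpace H]
        (A : H →L[ℝ] H), IsSelfAdjoint A → (∀ x : H, 0 ≤ ⟪A x, x⟫) →
        ∀ f : H,
          (∫ t in Set.Ioi (0:ℝ),
              (1 + t) ^ m * ⟪(A ^ (m + 1)) (NormedSpace.exp ((-(2 * t)) • A) f), f⟫)
            ≤ C * (‖f‖ ^ 2 + ⟪(A ^ m) f, f⟫) := by
  intro m
  refine ⟨(Nat.factorial m : ℝ), by exact_mod_cast Nat.factorial_pos m, ?_⟩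
  intro H _ _ _ A hA hpos f
  set D : ℝ := ‖f‖ ^ 2 + ⟪(A ^ m) f, f⟫ with hD
  have hc0 : ∀ j : ℕ, 0 ≤ ⟪(A ^ j) f, f⟫ := fun j => pow_inner_nonneg A hA hpos j f
  have hczero : ⟪(A ^ 0) f, f⟫ = ‖f‖ ^ 2 := by
    simp [real_inner_self_eq_norm_sq]
  have hD0 : 0 ≤ D := by
    rw [hD]; have := hc0 m; positivity
  have interp : ∀ j : ℕ, j ≤ m → ⟪(A ^ j) f, f⟫ ≤ D := by
    intro j hj
    have := logconvex_le_max (fun k => ⟪(A ^ k) f, f⟫) hc0 (logconv A hA hpos f) m j hj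
    rcases le_max_iff.1 this with h | h
    · rw [hczero] at h
      have := hc0 m; rw [hD]; linarith
    · have h0 : (0:ℝ) ≤ ‖f‖ ^ 2 := by positivity
      rw [hD]; linarith
  -- main recursion
  have key : ∀ k : ℕ, k ≤ m → ∀ T : ℝ, 0 ≤ T →
      (∫ t in (0:ℝ)..T,
          (1 + t) ^ k * ⟪(A ^ (k + 1)) (NormedSpace.exp ((-(2 * t)) • A) f), f⟫)
        ≤ (Nat.factorial k : ℝ) * D := by
    intro k
    induction k with
    | zero =>
      intro _ T hT
      have heq : (∫ t in (0:ℝ)..T,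
          ⟪(A ^ (0 + 1)) (NormedSpace.exp ((-(2 * t)) • A) f), f⟫)
          = (-(1/2) * ⟪(A ^ 0) (NormedSpace.exp ((-(2 * T)) • A) f), f⟫)
            - (-(1/2) * ⟪(A ^ 0) (NormedSpace.exp ((-(2 * (0:ℝ))) • A) f), f⟫) := by
        apply intervalIntegral.integral_eq_sub_of_hasDerivAt
          (f := fun s => -(1/2) * ⟪(A ^ 0) (NormedSpace.exp ((-(2 * s)) • A) f), f⟫)
        · intro t _
          have h := HasDerivAt.const_mul (-(1/2) : ℝ) (phi_deriv A f 0 t)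
          exact h.congr_deriv (by ring)
        · exact (phi_cont A f (0 + 1)).intervalIntegrable 0 T
      simp only [pow_zero, one_mul]
      rw [heq, phi_zero A f 0]
      have h1 := phi_nonneg A hA hpos f 0 T
      have h2 := interp 0 (Nat.zero_le m)
      simp only [Nat.factorial_zero, Nat.cast_one, one_mul]
      linarith
    | succ k ih =>
      intro hk1 T hT
      have hkm : k ≤ m := Nat.le_of_succ_le hk1
      have IH := ih hkm T hT
      set J : ℝ := ∫ t in (0:ℝ)..T,
          (1 + t) ^ k * ⟪(A ^ (k + 1)) (NormedSpace.exp ((-(2 * t)) • A) f), f⟫ with hJ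
      have hUderiv : ∀ t ∈ Set.uIcc (0:ℝ) T,
          HasDerivAt (fun s : ℝ => (1 + s) ^ (k + 1)) (((k:ℝ) + 1) * (1 + t) ^ k) t := by
        intro t _
        have h := ((hasDerivAt_id t).const_add (1:ℝ)).fun_pow (k + 1)
        exact h.congr_deriv (by push_cast; simp)
      have hVderiv : ∀ t ∈ Set.uIcc (0:ℝ) T,
          HasDerivAt (fun s => ⟪(A ^ (k + 1)) (NormedSpace.exp ((-(2 * s)) • A) f), f⟫)
            (-2 * ⟪(A ^ (k + 1 + 1)) (NormedSpace.exp ((-(2 * t)) • A) f), f⟫) t :=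
        fun t _ => phi_deriv A f (k + 1) t
      have hu'int : IntervalIntegrable (fun t : ℝ => ((k:ℝ) + 1) * (1 + t) ^ k)
          MeasureTheory.volume 0 T :=
        (continuous_const.mul ((continuous_const.add continuous_id).pow k)).intervalIntegrable 0 T
      have hv'int : IntervalIntegrable
          (fun t : ℝ => -2 * ⟪(A ^ (k + 1 + 1)) (NormedSpace.exp ((-(2 * t)) • A) f), f⟫)
          MeasureTheory.volume 0 T :=
        (continuous_const.mul (phi_cont A f (k + 1 + 1))).intervalIntegrable 0 T
      have ibp := intervalIntegral.integral_mul_deriv_eq_deriv_mul hUderiv hVderiv hu'int hv'int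
      have l1 : (∫ t in (0:ℝ)..T, (1 + t) ^ (k + 1)
            * (-2 * ⟪(A ^ (k + 1 + 1)) (NormedSpace.exp ((-(2 * t)) • A) f), f⟫))
          = -2 * ∫ t in (0:ℝ)..T, (1 + t) ^ (k + 1)
            * ⟪(A ^ (k + 1 + 1)) (NormedSpace.exp ((-(2 * t)) • A) f), f⟫ := by
        rw [← intervalIntegral.integral_const_mul]
        apply intervalIntegral.integral_congr
        intro t _
        ring
      have r1 : (∫ t in (0:ℝ)..T, (((k:ℝ) + 1) * (1 + t) ^ k)
            * ⟪(A ^ (k + 1)) (NormedSpace.exp ((-(2 * t)) • A) f), f⟫)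
          = ((k:ℝ) + 1) * J := by
        rw [hJ, ← intervalIntegral.integral_const_mul]
        apply intervalIntegral.integral_congr
        intro t _
        ring
      rw [l1, r1, phi_zero A f (k + 1)] at ibp
      have hb1 : 0 ≤ (1 + T) ^ (k + 1)
          * ⟪(A ^ (k + 1)) (NormedSpace.exp ((-(2 * T)) • A) f), f⟫ :=
        mul_nonneg (pow_nonneg (by linarith) _) (phi_nonneg A hA hpos f (k + 1) T)
      have hck : ⟪(A ^ (k + 1)) f, f⟫ ≤ D := interp (k + 1) hk1
      have hIH' : ((k:ℝ) + 1) * J ≤ ((k:ℝ) + 1) * ((Nat.factorial k : ℝ) * D) :=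
        mul_le_mul_of_nonneg_left IH (by positivity)
      have hfaceq : (Nat.factorial (k + 1) : ℝ)
          = ((k:ℝ) + 1) * (Nat.factorial k : ℝ) := by
        rw [Nat.factorial_succ]; push_cast; ring
      have hfac1 : (1:ℝ) ≤ ((k:ℝ) + 1) * (Nat.factorial k : ℝ) := by
        rw [← hfaceq]
        exact_mod_cast Nat.one_le_iff_ne_zero.2 (Nat.factorial_ne_zero (k + 1))
      have hDle : D ≤ ((k:ℝ) + 1) * (Nat.factorial k : ℝ) * D := by
        nlinarith [hD0, hfac1]
      have he0 : ((1:ℝ) + 0) ^ (k + 1) = 1 := by norm_num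
      rw [he0, one_mul] at ibp
      rw [hfaceq]
      -- ibp : -2 * I = BT - c(k+1) - ((k+1)) * J
      linarith [ibp, hb1, hck, hIH', hDle]
  -- pass to the improper integral
  have gcont : Continuous (fun t : ℝ =>
      (1 + t) ^ m * ⟪(A ^ (m + 1)) (NormedSpace.exp ((-(2 * t)) • A) f), f⟫) :=
    ((continuous_const.add continuous_id).pow m).mul (phi_cont A f (m + 1))
  have hbnd : ∀ n : ℕ, (∫ t in (0:ℝ)..(n:ℝ),
      ‖(1 + t) ^ m * ⟪(A ^ (m + 1)) (NormedSpace.exp ((-(2 * t)) • A) f), f⟫‖)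
      ≤ (Nat.factorial m : ℝ) * D := by
    intro n
    have h1 : (∫ t in (0:ℝ)..(n:ℝ),
          ‖(1 + t) ^ m * ⟪(A ^ (m + 1)) (NormedSpace.exp ((-(2 * t)) • A) f), f⟫‖)
        = ∫ t in (0:ℝ)..(n:ℝ),
          (1 + t) ^ m * ⟪(A ^ (m + 1)) (NormedSpace.exp ((-(2 * t)) • A) f), f⟫ := by
      apply intervalIntegral.integral_congr
      intro t ht
      rw [Set.uIcc_of_le (by positivity : (0:ℝ) ≤ (n:ℝ))] at ht
      exact Real.norm_of_nonneg (mul_nonneg (pow_nonneg (by linarith [ht.1]) m)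
        (phi_nonneg A hA hpos f (m + 1) t))
    rw [h1]
    exact key m le_rfl (n : ℝ) (Nat.cast_nonneg n)
  have hInt : MeasureTheory.IntegrableOn (fun t : ℝ =>
      (1 + t) ^ m * ⟪(A ^ (m + 1)) (NormedSpace.exp ((-(2 * t)) • A) f), f⟫)
      (Set.Ioi (0:ℝ)) := by
    apply MeasureTheory.integrableOn_Ioi_of_intervalIntegral_norm_bounded
      ((Nat.factorial m : ℝ) * D) 0 (fun n : ℕ => gcont.integrableOn_Ioc)
      tendsto_natCast_atTop_atTop
    exact Filter.Eventually.of_forall hbnd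
  have hlim := MeasureTheory.intervalIntegral_tendsto_integral_Ioi 0 hInt
    (tendsto_natCast_atTop_atTop (R := ℝ))
  exact le_of_tendsto' hlim (fun n => key m le_rfl (n : ℝ) (Nat.cast_nonneg n))
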